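/- The DPRH function f is a genuine bivariate probability density: f(y₁,y₂) ≥ 0 for all (y₁,y₂) ∈ ℝ², and ∫_a^b ∫_a^b f(y₁,y₂) dy₂ dy₁ = 1; moreover the integral over the lower triangle equals ∫_a^b ∫_a^{y₁} θ₁ θ₂′ f₀(y₁) f₀(y₂) F₀(y₁)^{θ₁+θ₂−θ₂′−1} F₀(y₂)^{θ₂′−1} dy₂ dy₁ = θ₁/(θ₁+θ₂) and the integral over the upper triangle equals θ₂/(θ₁+θ₂). -/

import Mathlib

open MeasureTheory Set

open Filter

lemma ae_ne_vol (v : ℝ) : ∀ᵐ x : ℝ, x ≠ v := by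
  rw [ae_iff]
  convert Real.volume_singleton (a := v) using 2
  ext x; simp

lemma ae_imp_of_forall_Ioo {u v : ℝ} (huv : u ≤ v) {f g : ℝ → ℝ}
    (h : ∀ x ∈ Ioo u v, f x = g x) : ∀ᵐ x : ℝ, x ∈ uIoc u v → f x = g x := by
  filter_upwards [ae_ne_vol v] with x hxne hmem
  rw [uIoc_of_le huv] at hmem
  exact h x ⟨hmem.1, lt_of_le_of_ne hmem.2 hxne⟩

lemma ae_restrict_of_forall_Ioo {u v : ℝ} (huv : u ≤ v) {f g : ℝ → ℝ}
    (h : ∀ x ∈ Ioo u v, f x = g x) : f =ᵐ[volume.restrict (uIoc u v)] g := by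
  filter_upwards [ae_restrict_mem measurableSet_uIoc,
    ae_restrict_of_ae (ae_imp_of_forall_Ioo huv h)] with x hx h2
  exact h2 hx

lemma improper_ftc {a c : ℝ} (hac : a < c) {g G : ℝ → ℝ} {L M : ℝ}
    (hd : ∀ x ∈ Ioo a c, HasDerivAt G (g x) x)
    (hpos : ∀ x ∈ Ioo a c, 0 ≤ g x)
    (hL : Tendsto G (nhdsWithin a (Ioi a)) (nhds L))
    (hM : Tendsto G (nhdsWithin c (Iio c)) (nhds M)) :
    IntervalIntegrable g volume a c ∧ (∫ x in a..c, g x) = M - L := by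
  set Gt : ℝ → ℝ := fun x => if x ≤ a then L else if x < c then G x else M with hGt
  have hGta : Gt a = L := by simp [hGt]
  have hGtc : Gt c = M := by simp [hGt, not_le.mpr hac, lt_irrefl]
  have heq : ∀ x ∈ Ioo a c, Gt x = G x := by
    intro x hx; simp [hGt, not_le.mpr hx.1, hx.2]
  have hev : ∀ x ∈ Ioo a c, Gt =ᶠ[nhds x] G := by
    intro x hx
    filter_upwards [isOpen_Ioo.mem_nhds hx] with y hy using heq y hy
  have hdt : ∀ x ∈ Ioo a c, HasDerivAt Gt (g x) x := by
    intro x hx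
    exact (hd x hx).congr_of_eventuallyEq (hev x hx)
  have hcont : ContinuousOn Gt (Icc a c) := by
    intro x hx
    rcases eq_or_lt_of_le hx.1 with heqa | hax
    · subst heqa
      rw [ContinuousWithinAt, hGta]
      have hsub : Icc a c ⊆ {a} ∪ Ioi a := by
        intro y hy; rcases eq_or_lt_of_le hy.1 with h | h
        · exact Or.inl h.symm
        · exact Or.inr h
      refine Tendsto.mono_left ?_ (nhdsWithin_mono a hsub)
      rw [nhdsWithin_union, tendsto_sup]
      constructor
      · rw [nhdsWithin_singleton]
        have := tendsto_pure_nhds Gt a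
        rwa [hGta] at this
      · refine hL.congr' ?_
        filter_upwards [Ioo_mem_nhdsGT_of_mem (show a ∈ Ico a c from ⟨le_refl a, hac⟩)] with y hy
        exact (heq y hy).symm
    rcases eq_or_lt_of_le hx.2 with heqc | hxc
    · subst heqc
      rw [ContinuousWithinAt, hGtc]
      have hsub : Icc a x ⊆ {x} ∪ Iio x := by
        intro y hy; rcases eq_or_lt_of_le hy.2 with h | h
        · exact Or.inl h
        · exact Or.inr h
      refine Tendsto.mono_left ?_ (nhdsWithin_mono x hsub)
      rw [nhdsWithin_union, tendsto_sup]
      constructor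
      · rw [nhdsWithin_singleton]
        have := tendsto_pure_nhds Gt x
        rwa [hGtc] at this
      · refine hM.congr' ?_
        filter_upwards [Ioo_mem_nhdsLT_of_mem (show x ∈ Ioc a x from ⟨hac, le_refl x⟩)] with y hy
        exact (heq y hy).symm
    · exact (((hdt x ⟨hax, hxc⟩).continuousAt)).continuousWithinAt
  have hint : IntervalIntegrable g volume a c := by
    rw [intervalIntegrable_iff_integrableOn_Ioc_of_le hac.le]
    exact intervalIntegral.integrableOn_deriv_of_nonneg hcont hdt hpos
  refine ⟨hint, ?_⟩
  have hres := intervalIntegral.integral_eq_sub_of_hasDeriv_right_of_le hac.le hcont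
    (fun x hx => (hdt x hx).hasDerivWithinAt) hint
  rw [hGta, hGtc] at hres
  exact hres

lemma rpow_antideriv {F₀ f₀ : ℝ → ℝ} {x : ℝ} (hd : HasDerivAt F₀ (f₀ x) x)
    (hF : 0 < F₀ x) {θ : ℝ} (hθ : θ ≠ 0) :
    HasDerivAt (fun y => F₀ y ^ θ / θ) (f₀ x * F₀ x ^ (θ - 1)) x := by
  have h := (hd.rpow_const (p := θ) (Or.inl hF.ne')).div_const θ
  refine h.congr_deriv ?_
  field_simp

lemma J_lemma {a c : ℝ} (hac : a < c) {F₀ f₀ : ℝ → ℝ} {Mv : ℝ}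
    (hd : ∀ y ∈ Ioo a c, HasDerivAt F₀ (f₀ y) y)
    (hf₀pos : ∀ y ∈ Ioo a c, 0 ≤ f₀ y)
    (hF₀pos : ∀ y ∈ Ioo a c, 0 < F₀ y)
    (hFa : Tendsto F₀ (nhdsWithin a (Ioi a)) (nhds 0))
    (hFc : Tendsto F₀ (nhdsWithin c (Iio c)) (nhds Mv)) {θ : ℝ} (hθ : 0 < θ) :
    IntervalIntegrable (fun y => f₀ y * F₀ y ^ (θ - 1)) volume a c ∧
    (∫ y in a..c, f₀ y * F₀ y ^ (θ - 1)) = Mv ^ θ / θ := by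
  have hcontpow : ∀ t : ℝ, ContinuousAt (fun s : ℝ => s ^ θ / θ) t := by
    intro t
    exact (Real.continuousAt_rpow_const t θ (Or.inr hθ.le)).div_const θ
  have h := improper_ftc hac (g := fun y => f₀ y * F₀ y ^ (θ - 1))
    (G := fun y => F₀ y ^ θ / θ) (L := 0 ^ θ / θ) (M := Mv ^ θ / θ)
    (fun x hx => rpow_antideriv (hd x hx) (hF₀pos x hx) hθ.ne')
    (fun x hx => mul_nonneg (hf₀pos x hx) (Real.rpow_nonneg (hF₀pos x hx).le _))
    ((hcontpow 0).tendsto.comp hFa) ((hcontpow Mv).tendsto.comp hFc)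
  rwa [Real.zero_rpow hθ.ne', zero_div, sub_zero] at h

lemma K_lemma {a b u : ℝ} (hau : a < u) (hub : u < b) {F₀ f₀ : ℝ → ℝ}
    (hd : ∀ y ∈ Ioo a b, HasDerivAt F₀ (f₀ y) y)
    (hf₀pos : ∀ y ∈ Ioo a b, 0 ≤ f₀ y)
    (hF₀pos : ∀ y ∈ Ioo a b, 0 < F₀ y)
    (hFb : Tendsto F₀ (nhdsWithin b (Iio b)) (nhds 1)) {σ : ℝ} (hσ : σ ≠ 0) :
    IntervalIntegrable (fun y => f₀ y * F₀ y ^ (σ - 1)) volume u b ∧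
    (∫ y in u..b, f₀ y * F₀ y ^ (σ - 1)) = 1 / σ - F₀ u ^ σ / σ := by
  have hmem : ∀ y ∈ Ioo u b, y ∈ Ioo a b := fun y hy => ⟨hau.trans hy.1, hy.2⟩
  have hGu : ContinuousAt (fun y => F₀ y ^ σ / σ) u :=
    (rpow_antideriv (hd u ⟨hau, hub⟩) (hF₀pos u ⟨hau, hub⟩) hσ).continuousAt
  have h := improper_ftc hub (g := fun y => f₀ y * F₀ y ^ (σ - 1))
    (G := fun y => F₀ y ^ σ / σ) (L := F₀ u ^ σ / σ) (M := (1:ℝ) ^ σ / σ)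
    (fun x hx => rpow_antideriv (hd x (hmem x hx)) (hF₀pos x (hmem x hx)) hσ)
    (fun x hx => mul_nonneg (hf₀pos x (hmem x hx))
      (Real.rpow_nonneg (hF₀pos x (hmem x hx)).le _))
    (hGu.tendsto.mono_left nhdsWithin_le_nhds)
    (((Real.continuousAt_rpow_const 1 σ (Or.inl one_ne_zero)).div_const σ).tendsto.comp hFb)
  rwa [Real.one_rpow] at h

lemma K0_lemma {a b u : ℝ} (hau : a < u) (hub : u < b) {F₀ f₀ : ℝ → ℝ}
    (hd : ∀ y ∈ Ioo a b, HasDerivAt F₀ (f₀ y) y)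
    (hf₀pos : ∀ y ∈ Ioo a b, 0 ≤ f₀ y)
    (hF₀pos : ∀ y ∈ Ioo a b, 0 < F₀ y)
    (hFb : Tendsto F₀ (nhdsWithin b (Iio b)) (nhds 1)) :
    IntervalIntegrable (fun y => f₀ y * F₀ y ^ (-1 : ℝ)) volume u b ∧
    (∫ y in u..b, f₀ y * F₀ y ^ (-1 : ℝ)) = 0 - Real.log (F₀ u) := by
  have hmem : ∀ y ∈ Ioo u b, y ∈ Ioo a b := fun y hy => ⟨hau.trans hy.1, hy.2⟩
  have hder : ∀ x ∈ Ioo u b, HasDerivAt (fun y => Real.log (F₀ y))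
      (f₀ x * F₀ x ^ (-1 : ℝ)) x := by
    intro x hx
    have h := (hd x (hmem x hx)).log (hF₀pos x (hmem x hx)).ne'
    convert h using 1
    rw [Real.rpow_neg_one, div_eq_mul_inv]
  have hGu : ContinuousAt (fun y => Real.log (F₀ y)) u := by
    have := (hd u ⟨hau, hub⟩).log (hF₀pos u ⟨hau, hub⟩).ne'
    exact this.continuousAt
  have h := improper_ftc hub (g := fun y => f₀ y * F₀ y ^ (-1 : ℝ))
    (G := fun y => Real.log (F₀ y)) (L := Real.log (F₀ u)) (M := Real.log 1)
    hder
    (fun x hx => mul_nonneg (hf₀pos x (hmem x hx))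
      (Real.rpow_nonneg (hF₀pos x (hmem x hx)).le _))
    (hGu.tendsto.mono_left nhdsWithin_le_nhds)
    ((Real.continuousAt_log one_ne_zero).tendsto.comp hFb)
  rwa [Real.log_one] at h

lemma L0_lemma {a b : ℝ} (hab : a < b) {F₀ f₀ : ℝ → ℝ}
    (hd : ∀ y ∈ Ioo a b, HasDerivAt F₀ (f₀ y) y)
    (hf₀pos : ∀ y ∈ Ioo a b, 0 ≤ f₀ y)
    (hF₀pos : ∀ y ∈ Ioo a b, 0 < F₀ y)
    (hF₀le1 : ∀ y ∈ Ioo a b, F₀ y ≤ 1)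
    (hFa : Tendsto F₀ (nhdsWithin a (Ioi a)) (nhds 0))
    (hFb : Tendsto F₀ (nhdsWithin b (Iio b)) (nhds 1)) {θ : ℝ} (hθ : 0 < θ) :
    IntervalIntegrable (fun y => f₀ y * F₀ y ^ (θ - 1) * (0 - Real.log (F₀ y))) volume a b ∧
    (∫ y in a..b, f₀ y * F₀ y ^ (θ - 1) * (0 - Real.log (F₀ y))) = 1 / θ ^ 2 := by
  have hder : ∀ x ∈ Ioo a b, HasDerivAt
      (fun y => F₀ y ^ θ / θ ^ 2 - Real.log (F₀ y) * F₀ y ^ θ / θ)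
      (f₀ x * F₀ x ^ (θ - 1) * (0 - Real.log (F₀ x))) x := by
    intro x hx
    have hF := hF₀pos x hx
    have h1 := (hd x hx).rpow_const (p := θ) (Or.inl hF.ne')
    have hlog := (hd x hx).log hF.ne'
    have h := (h1.div_const (θ ^ 2)).sub ((hlog.mul h1).div_const θ)
    refine h.congr_deriv ?_
    have hpow : F₀ x ^ (θ - 1) = F₀ x ^ θ / F₀ x := by
      rw [Real.rpow_sub hF, Real.rpow_one]
    rw [hpow]
    field_simp
    ring
  have hFa' : Tendsto F₀ (nhdsWithin a (Ioi a)) (nhdsWithin 0 (Ioi 0)) := by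
    refine tendsto_nhdsWithin_of_tendsto_nhds_of_eventually_within F₀ hFa ?_
    filter_upwards [Ioo_mem_nhdsGT_of_mem (show a ∈ Ico a b from ⟨le_refl a, hab⟩)] with y hy
    exact hF₀pos y hy
  have hT1a : Tendsto (fun y => F₀ y ^ θ) (nhdsWithin a (Ioi a)) (nhds ((0:ℝ) ^ θ)) :=
    (Real.continuousAt_rpow_const 0 θ (Or.inr hθ.le)).tendsto.comp hFa
  have hT2a : Tendsto (fun y => Real.log (F₀ y) * F₀ y ^ θ) (nhdsWithin a (Ioi a)) (nhds 0) :=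
    (tendsto_log_mul_rpow_nhdsGT_zero hθ).comp hFa'
  have hLa : Tendsto (fun y => F₀ y ^ θ / θ ^ 2 - Real.log (F₀ y) * F₀ y ^ θ / θ)
      (nhdsWithin a (Ioi a)) (nhds 0) := by
    have := (hT1a.div_const (θ ^ 2)).sub (hT2a.div_const θ)
    simpa [Real.zero_rpow hθ.ne'] using this
  have hT1b : Tendsto (fun y => F₀ y ^ θ) (nhdsWithin b (Iio b)) (nhds ((1:ℝ) ^ θ)) :=
    (Real.continuousAt_rpow_const 1 θ (Or.inl one_ne_zero)).tendsto.comp hFb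
  have hT2b : Tendsto (fun y => Real.log (F₀ y) * F₀ y ^ θ)
      (nhdsWithin b (Iio b)) (nhds (Real.log 1 * (1:ℝ) ^ θ)) := by
    exact ((Real.continuousAt_log one_ne_zero).mul
      (Real.continuousAt_rpow_const 1 θ (Or.inl one_ne_zero))).tendsto.comp hFb
  have hMb : Tendsto (fun y => F₀ y ^ θ / θ ^ 2 - Real.log (F₀ y) * F₀ y ^ θ / θ)
      (nhdsWithin b (Iio b)) (nhds (1 / θ ^ 2)) := by
    have := (hT1b.div_const (θ ^ 2)).sub (hT2b.div_const θ)
    simpa using this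
  have h := improper_ftc hab
    (g := fun y => f₀ y * F₀ y ^ (θ - 1) * (0 - Real.log (F₀ y)))
    (G := fun y => F₀ y ^ θ / θ ^ 2 - Real.log (F₀ y) * F₀ y ^ θ / θ)
    (L := 0) (M := 1 / θ ^ 2)
    hder
    (fun x hx => mul_nonneg (mul_nonneg (hf₀pos x hx)
      (Real.rpow_nonneg (hF₀pos x hx).le _))
      (by
        rw [zero_sub, neg_nonneg]
        exact Real.log_nonpos (hF₀pos x hx).le (hF₀le1 x hx)))
    hLa hMb
  rwa [sub_zero] at h

noncomputable def dprh (a b : ℝ) (F₀ f₀ : ℝ → ℝ) (θ₁ θ₂ θ₁' θ₂' : ℝ) (y₁ y₂ : ℝ) : ℝ :=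
  if a < y₁ ∧ y₁ < y₂ ∧ y₂ < b then
    θ₁' * θ₂ * f₀ y₁ * f₀ y₂ * F₀ y₁ ^ (θ₁' - 1) * F₀ y₂ ^ (θ₁ + θ₂ - θ₁' - 1)
  else if a < y₂ ∧ y₂ < y₁ ∧ y₁ < b then
    θ₁ * θ₂' * f₀ y₁ * f₀ y₂ * F₀ y₁ ^ (θ₁ + θ₂ - θ₂' - 1) * F₀ y₂ ^ (θ₂' - 1)
  else 0

theorem dprh_is_density
    (a b : ℝ) (hab : a < b) (F₀ f₀ : ℝ → ℝ)
    (hderiv : ∀ y ∈ Ioo a b, HasDerivAt F₀ (f₀ y) y)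
    (hf₀cont : ContinuousOn f₀ (Ioo a b))
    (hmono : StrictMonoOn F₀ (Ioo a b))
    (hf₀pos : ∀ y ∈ Ioo a b, 0 < f₀ y)
    (hF₀pos : ∀ y ∈ Ioo a b, 0 < F₀ y)
    (hF₀lt1 : ∀ y ∈ Ioo a b, F₀ y < 1)
    (hFa : Filter.Tendsto F₀ (nhdsWithin a (Ioi a)) (nhds 0))
    (hFb : Filter.Tendsto F₀ (nhdsWithin b (Iio b)) (nhds 1))
    (θ₁ θ₂ θ₁' θ₂' : ℝ) (hθ₁ : 0 < θ₁) (hθ₂ : 0 < θ₂) (hθ₁' : 0 < θ₁') (hθ₂' : 0 < θ₂')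
    :
    (∀ y₁ y₂ : ℝ, 0 ≤ dprh a b F₀ f₀ θ₁ θ₂ θ₁' θ₂' y₁ y₂) ∧
    (∫ y₁ in a..b, ∫ y₂ in a..y₁, dprh a b F₀ f₀ θ₁ θ₂ θ₁' θ₂' y₁ y₂) =
      (∫ y₁ in a..b, ∫ y₂ in a..y₁,
        θ₁ * θ₂' * f₀ y₁ * f₀ y₂ * F₀ y₁ ^ (θ₁ + θ₂ - θ₂' - 1) * F₀ y₂ ^ (θ₂' - 1)) ∧
    (∫ y₁ in a..b, ∫ y₂ in a..y₁,
        θ₁ * θ₂' * f₀ y₁ * f₀ y₂ * F₀ y₁ ^ (θ₁ + θ₂ - θ₂' - 1) * F₀ y₂ ^ (θ₂' - 1)) = θ₁ / (θ₁ + θ₂) ∧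
    (∫ y₁ in a..b, ∫ y₂ in y₁..b, dprh a b F₀ f₀ θ₁ θ₂ θ₁' θ₂' y₁ y₂) = θ₂ / (θ₁ + θ₂) ∧
    (∫ y₁ in a..b, ∫ y₂ in a..b, dprh a b F₀ f₀ θ₁ θ₂ θ₁' θ₂' y₁ y₂) = 1 := by
  have hf₀nn : ∀ y ∈ Ioo a b, 0 ≤ f₀ y := fun y hy => (hf₀pos y hy).le
  -- Part 1: nonnegativity
  have part1 : ∀ y₁ y₂ : ℝ, 0 ≤ dprh a b F₀ f₀ θ₁ θ₂ θ₁' θ₂' y₁ y₂ := by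
    intro y₁ y₂
    unfold dprh
    split_ifs with h1 h2
    · have hy1 : y₁ ∈ Ioo a b := ⟨h1.1, h1.2.1.trans h1.2.2⟩
      have hy2 : y₂ ∈ Ioo a b := ⟨h1.1.trans h1.2.1, h1.2.2⟩
      have a1 := hf₀pos y₁ hy1
      have a2 := hf₀pos y₂ hy2
      have a3 := hF₀pos y₁ hy1
      have a4 := hF₀pos y₂ hy2
      positivity
    · have hy1 : y₁ ∈ Ioo a b := ⟨h2.1.trans h2.2.1, h2.2.2⟩
      have hy2 : y₂ ∈ Ioo a b := ⟨h2.1, h2.2.1.trans h2.2.2⟩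
      have a1 := hf₀pos y₁ hy1
      have a2 := hf₀pos y₂ hy2
      have a3 := hF₀pos y₁ hy1
      have a4 := hF₀pos y₂ hy2
      positivity
    · exact le_refl 0
  -- the J/Jb facts
  have lowJ : ∀ y₁ ∈ Ioo a b,
      IntervalIntegrable (fun y => f₀ y * F₀ y ^ (θ₂' - 1)) volume a y₁ ∧
      (∫ y in a..y₁, f₀ y * F₀ y ^ (θ₂' - 1)) = F₀ y₁ ^ θ₂' / θ₂' := by
    intro y₁ hy₁
    exact J_lemma hy₁.1 (fun y hy => hderiv y ⟨hy.1, hy.2.trans hy₁.2⟩)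
      (fun y hy => hf₀nn y ⟨hy.1, hy.2.trans hy₁.2⟩)
      (fun y hy => hF₀pos y ⟨hy.1, hy.2.trans hy₁.2⟩) hFa
      (((hderiv y₁ hy₁).continuousAt.tendsto).mono_left nhdsWithin_le_nhds) hθ₂'
  have Jb : ∀ θ : ℝ, 0 < θ →
      IntervalIntegrable (fun y => f₀ y * F₀ y ^ (θ - 1)) volume a b ∧
      (∫ y in a..b, f₀ y * F₀ y ^ (θ - 1)) = 1 / θ := by
    intro θ hθ
    have h := J_lemma hab hderiv hf₀nn hF₀pos hFa hFb hθ
    rwa [Real.one_rpow] at h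
  -- restricted forms of dprh
  have hlow_eq : ∀ y₁ ∈ Ioo a b, ∀ y₂ ∈ Ioo a y₁,
      dprh a b F₀ f₀ θ₁ θ₂ θ₁' θ₂' y₁ y₂ =
      (θ₁ * θ₂' * f₀ y₁ * F₀ y₁ ^ (θ₁ + θ₂ - θ₂' - 1)) * (f₀ y₂ * F₀ y₂ ^ (θ₂' - 1)) := by
    intro y₁ hy₁ y₂ hy₂
    unfold dprh
    rw [if_neg, if_pos]
    · ring
    · exact ⟨hy₂.1, hy₂.2, hy₁.2⟩
    · rintro ⟨-, h, -⟩
      exact absurd h (not_lt.mpr hy₂.2.le)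
  have hup_eq : ∀ y₁ ∈ Ioo a b, ∀ y₂ ∈ Ioo y₁ b,
      dprh a b F₀ f₀ θ₁ θ₂ θ₁' θ₂' y₁ y₂ =
      (θ₁' * θ₂ * f₀ y₁ * F₀ y₁ ^ (θ₁' - 1)) * (f₀ y₂ * F₀ y₂ ^ (θ₁ + θ₂ - θ₁' - 1)) := by
    intro y₁ hy₁ y₂ hy₂
    unfold dprh
    rw [if_pos]
    · ring
    · exact ⟨hy₁.1, hy₂.1, hy₂.2⟩
  -- inner lower integral of dprh
  have hlow_inner : ∀ y₁ ∈ Ioo a b,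
      (∫ y₂ in a..y₁, dprh a b F₀ f₀ θ₁ θ₂ θ₁' θ₂' y₁ y₂) =
      θ₁ * (f₀ y₁ * F₀ y₁ ^ (θ₁ + θ₂ - 1)) := by
    intro y₁ hy₁
    rw [intervalIntegral.integral_congr_ae (ae_imp_of_forall_Ioo hy₁.1.le (hlow_eq y₁ hy₁)),
        intervalIntegral.integral_const_mul, (lowJ y₁ hy₁).2]
    have hF := hF₀pos y₁ hy₁
    rw [show (θ₁ + θ₂ - 1 : ℝ) = (θ₁ + θ₂ - θ₂' - 1) + θ₂' by ring, Real.rpow_add hF]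
    generalize F₀ y₁ ^ (θ₁ + θ₂ - θ₂' - 1) = A
    generalize F₀ y₁ ^ (θ₂' : ℝ) = B
    field_simp
  have hlow_inner' : ∀ y₁ ∈ Ioo a b,
      (∫ y₂ in a..y₁, θ₁ * θ₂' * f₀ y₁ * f₀ y₂ * F₀ y₁ ^ (θ₁ + θ₂ - θ₂' - 1) * F₀ y₂ ^ (θ₂' - 1)) =
      θ₁ * (f₀ y₁ * F₀ y₁ ^ (θ₁ + θ₂ - 1)) := by
    intro y₁ hy₁
    have hfe : (fun y₂ => θ₁ * θ₂' * f₀ y₁ * f₀ y₂ * F₀ y₁ ^ (θ₁ + θ₂ - θ₂' - 1) * F₀ y₂ ^ (θ₂' - 1)) =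
        (fun y₂ => (θ₁ * θ₂' * f₀ y₁ * F₀ y₁ ^ (θ₁ + θ₂ - θ₂' - 1)) * (f₀ y₂ * F₀ y₂ ^ (θ₂' - 1))) := by
      funext y₂; ring
    rw [hfe, intervalIntegral.integral_const_mul, (lowJ y₁ hy₁).2]
    have hF := hF₀pos y₁ hy₁
    rw [show (θ₁ + θ₂ - 1 : ℝ) = (θ₁ + θ₂ - θ₂' - 1) + θ₂' by ring, Real.rpow_add hF]
    generalize F₀ y₁ ^ (θ₁ + θ₂ - θ₂' - 1) = A
    generalize F₀ y₁ ^ (θ₂' : ℝ) = B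
    field_simp
  have hθ12 : (0:ℝ) < θ₁ + θ₂ := by positivity
  -- outer lower values
  have lower_val : (∫ y₁ in a..b, ∫ y₂ in a..y₁, dprh a b F₀ f₀ θ₁ θ₂ θ₁' θ₂' y₁ y₂) =
      θ₁ / (θ₁ + θ₂) := by
    rw [intervalIntegral.integral_congr_ae (ae_imp_of_forall_Ioo hab.le hlow_inner),
        intervalIntegral.integral_const_mul, (Jb (θ₁ + θ₂) hθ12).2, mul_one_div]
  have lower_val' : (∫ y₁ in a..b, ∫ y₂ in a..y₁,
      θ₁ * θ₂' * f₀ y₁ * f₀ y₂ * F₀ y₁ ^ (θ₁ + θ₂ - θ₂' - 1) * F₀ y₂ ^ (θ₂' - 1)) =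
      θ₁ / (θ₁ + θ₂) := by
    rw [intervalIntegral.integral_congr_ae (ae_imp_of_forall_Ioo hab.le hlow_inner'),
        intervalIntegral.integral_const_mul, (Jb (θ₁ + θ₂) hθ12).2, mul_one_div]
  have hlow_outer_int : IntervalIntegrable
      (fun y₁ => ∫ y₂ in a..y₁, dprh a b F₀ f₀ θ₁ θ₂ θ₁' θ₂' y₁ y₂) volume a b :=
    (((Jb (θ₁ + θ₂) hθ12).1.const_mul θ₁).congr_ae
      (ae_restrict_of_forall_Ioo hab.le fun y hy => (hlow_inner y hy).symm))
  -- inner upper integrability of dprh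
  have hup_int : ∀ y₁ ∈ Ioo a b,
      IntervalIntegrable (fun y₂ => dprh a b F₀ f₀ θ₁ θ₂ θ₁' θ₂' y₁ y₂) volume y₁ b := by
    intro y₁ hy₁
    by_cases hσ : θ₁ + θ₂ - θ₁' = 0
    · have hexp : θ₁ + θ₂ - θ₁' - 1 = -1 := by rw [hσ]; norm_num
      have hK := (K0_lemma hy₁.1 hy₁.2 hderiv hf₀nn hF₀pos hFb).1
      refine (hK.const_mul (θ₁' * θ₂ * f₀ y₁ * F₀ y₁ ^ (θ₁' - 1))).congr_ae
        (ae_restrict_of_forall_Ioo hy₁.2.le fun y₂ hy₂ => ?_)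
      rw [hup_eq y₁ hy₁ y₂ hy₂, hexp]
    · have hK := (K_lemma hy₁.1 hy₁.2 hderiv hf₀nn hF₀pos hFb hσ).1
      refine (hK.const_mul (θ₁' * θ₂ * f₀ y₁ * F₀ y₁ ^ (θ₁' - 1))).congr_ae
        (ae_restrict_of_forall_Ioo hy₁.2.le fun y₂ hy₂ => ?_)
      rw [hup_eq y₁ hy₁ y₂ hy₂]
  -- upper outer: integrability and value
  have upper : IntervalIntegrable
      (fun y₁ => ∫ y₂ in y₁..b, dprh a b F₀ f₀ θ₁ θ₂ θ₁' θ₂' y₁ y₂) volume a b ∧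
      (∫ y₁ in a..b, ∫ y₂ in y₁..b, dprh a b F₀ f₀ θ₁ θ₂ θ₁' θ₂' y₁ y₂) = θ₂ / (θ₁ + θ₂) := by
    by_cases hσ : θ₁ + θ₂ - θ₁' = 0
    · have hexp : θ₁ + θ₂ - θ₁' - 1 = -1 := by rw [hσ]; norm_num
      have h12 : θ₁ + θ₂ = θ₁' := by linarith
      have hL0 := L0_lemma hab hderiv hf₀nn hF₀pos (fun y hy => (hF₀lt1 y hy).le) hFa hFb hθ₁'
      have hinner : ∀ y₁ ∈ Ioo a b,
          (∫ y₂ in y₁..b, dprh a b F₀ f₀ θ₁ θ₂ θ₁' θ₂' y₁ y₂) =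
          (θ₁' * θ₂) * (f₀ y₁ * F₀ y₁ ^ (θ₁' - 1) * (0 - Real.log (F₀ y₁))) := by
        intro y₁ hy₁
        have hK := K0_lemma hy₁.1 hy₁.2 hderiv hf₀nn hF₀pos hFb
        rw [intervalIntegral.integral_congr_ae (ae_imp_of_forall_Ioo hy₁.2.le
            (fun y₂ hy₂ => by rw [hup_eq y₁ hy₁ y₂ hy₂, hexp])),
          intervalIntegral.integral_const_mul, hK.2]
        ring
      constructor
      · exact (hL0.1.const_mul (θ₁' * θ₂)).congr_ae
          (ae_restrict_of_forall_Ioo hab.le fun y hy => (hinner y hy).symm)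
      · rw [intervalIntegral.integral_congr_ae (ae_imp_of_forall_Ioo hab.le hinner),
          intervalIntegral.integral_const_mul, hL0.2, h12]
        field_simp
    · have hinner : ∀ y₁ ∈ Ioo a b,
          (∫ y₂ in y₁..b, dprh a b F₀ f₀ θ₁ θ₂ θ₁' θ₂' y₁ y₂) =
          (θ₁' * θ₂ / (θ₁ + θ₂ - θ₁')) * (f₀ y₁ * F₀ y₁ ^ (θ₁' - 1)) -
          (θ₁' * θ₂ / (θ₁ + θ₂ - θ₁')) * (f₀ y₁ * F₀ y₁ ^ (θ₁ + θ₂ - 1)) := by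
        intro y₁ hy₁
        have hK := K_lemma hy₁.1 hy₁.2 hderiv hf₀nn hF₀pos hFb hσ
        rw [intervalIntegral.integral_congr_ae (ae_imp_of_forall_Ioo hy₁.2.le (hup_eq y₁ hy₁)),
          intervalIntegral.integral_const_mul, hK.2]
        have hF := hF₀pos y₁ hy₁
        rw [show (θ₁ + θ₂ - 1 : ℝ) = (θ₁' - 1) + (θ₁ + θ₂ - θ₁') by ring, Real.rpow_add hF]
        generalize F₀ y₁ ^ (θ₁' - 1 : ℝ) = A
        generalize F₀ y₁ ^ (θ₁ + θ₂ - θ₁' : ℝ) = B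
        field_simp
      have hi1 := (Jb θ₁' hθ₁').1.const_mul (θ₁' * θ₂ / (θ₁ + θ₂ - θ₁'))
      have hi2 := (Jb (θ₁ + θ₂) hθ12).1.const_mul (θ₁' * θ₂ / (θ₁ + θ₂ - θ₁'))
      constructor
      · exact (hi1.sub hi2).congr_ae
          (ae_restrict_of_forall_Ioo hab.le fun y hy => (hinner y hy).symm)
      · rw [intervalIntegral.integral_congr_ae (ae_imp_of_forall_Ioo hab.le hinner),
          intervalIntegral.integral_sub hi1 hi2,
          intervalIntegral.integral_const_mul, intervalIntegral.integral_const_mul,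
          (Jb θ₁' hθ₁').2, (Jb (θ₁ + θ₂) hθ12).2]
        field_simp
  -- splitting the full inner integral
  have hsplit : ∀ y₁ ∈ Ioo a b,
      (∫ y₂ in a..b, dprh a b F₀ f₀ θ₁ θ₂ θ₁' θ₂' y₁ y₂) =
      (∫ y₂ in a..y₁, dprh a b F₀ f₀ θ₁ θ₂ θ₁' θ₂' y₁ y₂) +
      (∫ y₂ in y₁..b, dprh a b F₀ f₀ θ₁ θ₂ θ₁' θ₂' y₁ y₂) := by
    intro y₁ hy₁
    have h1 : IntervalIntegrable (fun y₂ => dprh a b F₀ f₀ θ₁ θ₂ θ₁' θ₂' y₁ y₂) volume a y₁ :=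
      ((lowJ y₁ hy₁).1.const_mul (θ₁ * θ₂' * f₀ y₁ * F₀ y₁ ^ (θ₁ + θ₂ - θ₂' - 1))).congr_ae
        (ae_restrict_of_forall_Ioo hy₁.1.le fun y₂ hy₂ => (hlow_eq y₁ hy₁ y₂ hy₂).symm)
    rw [← intervalIntegral.integral_add_adjacent_intervals h1 (hup_int y₁ hy₁)]
  have final : (∫ y₁ in a..b, ∫ y₂ in a..b, dprh a b F₀ f₀ θ₁ θ₂ θ₁' θ₂' y₁ y₂) = 1 := by
    rw [intervalIntegral.integral_congr_ae (ae_imp_of_forall_Ioo hab.le hsplit),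
      intervalIntegral.integral_add hlow_outer_int upper.1, lower_val, upper.2,
      ← add_div, div_self hθ12.ne']
  exact ⟨part1, lower_val.trans lower_val'.symm, lower_val', upper.2, final⟩
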